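/- (Unique steady state with log utility, γ = 1.) Let G > 1, w > 0, m > 0. Then the function f(s) := log c(1−s, G·(w+s)) + m·log s is strictly concave on (0,1) with f'(s) → ∞ as s → 0⁺ and f'(s) → −∞ as s → 1⁻, and there exists a unique s* ∈ (0,1) satisfying G·s*·c_z(1−s*, G·(w+s*)) = s*·c_y(1−s*, G·(w+s*)) − m·c(1−s*, G·(w+s*)); this s* is the unique maximizer of f on (0,1). -/

import Mathlib

open Real Filter Set Topology

/-- Assumption C: `c` is a positive, homogeneous of degree 1, twice continuously
differentiable function on `(0,∞)²` with partial derivatives `cy, cz > 0`, second partial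
derivatives `cyy, czz < 0`, and Inada conditions. -/
structure AssumptionC (c cy cz cyy cyz czz : ℝ → ℝ → ℝ) : Prop where
  c_pos : ∀ ⦃y z : ℝ⦄, 0 < y → 0 < z → 0 < c y z
  homog : ∀ ⦃l y z : ℝ⦄, 0 < l → 0 < y → 0 < z → c (l * y) (l * z) = l * c y z
  hderiv_y : ∀ ⦃y z : ℝ⦄, 0 < y → 0 < z → HasDerivAt (fun u => c u z) (cy y z) y
  hderiv_z : ∀ ⦃y z : ℝ⦄, 0 < y → 0 < z → HasDerivAt (fun v => c y v) (cz y z) z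
  hderiv_yy : ∀ ⦃y z : ℝ⦄, 0 < y → 0 < z → HasDerivAt (fun u => cy u z) (cyy y z) y
  hderiv_yz : ∀ ⦃y z : ℝ⦄, 0 < y → 0 < z → HasDerivAt (fun v => cy y v) (cyz y z) z
  hderiv_zy : ∀ ⦃y z : ℝ⦄, 0 < y → 0 < z → HasDerivAt (fun u => cz u z) (cyz y z) y
  hderiv_zz : ∀ ⦃y z : ℝ⦄, 0 < y → 0 < z → HasDerivAt (fun v => cz y v) (czz y z) z
  cy_pos : ∀ ⦃y z : ℝ⦄, 0 < y → 0 < z → 0 < cy y z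
  cz_pos : ∀ ⦃y z : ℝ⦄, 0 < y → 0 < z → 0 < cz y z
  cyy_neg : ∀ ⦃y z : ℝ⦄, 0 < y → 0 < z → cyy y z < 0
  czz_neg : ∀ ⦃y z : ℝ⦄, 0 < y → 0 < z → czz y z < 0
  cont2 : ContinuousOn (fun p : ℝ × ℝ => (cyy p.1 p.2, cyz p.1 p.2, czz p.1 p.2))
    {p : ℝ × ℝ | 0 < p.1 ∧ 0 < p.2}
  inada_y : ∀ ⦃z : ℝ⦄, 0 < z → Tendsto (fun y => cy y z) (𝓝[>] (0:ℝ)) atTop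
  inada_z : ∀ ⦃y : ℝ⦄, 0 < y → Tendsto (fun z => cz y z) (𝓝[>] (0:ℝ)) atTop

private lemma scale_c {c cy cz cyy cyz czz : ℝ → ℝ → ℝ} (hC : AssumptionC c cy cz cyy cyz czz)
    {y z : ℝ} (hy : 0 < y) (hz : 0 < z) : c y z = z * c (y / z) 1 := by
  have h := hC.homog hz (div_pos hy hz) one_pos
  rw [mul_one] at h
  rwa [show z * (y / z) = y by field_simp] at h

private lemma cy_scale {c cy cz cyy cyz czz : ℝ → ℝ → ℝ} (hC : AssumptionC c cy cz cyy cyz czz)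
    {y z : ℝ} (hy : 0 < y) (hz : 0 < z) : cy y z = cy (y / z) 1 := by
  have h1 : HasDerivAt (fun u => c u z) (cy y z) y := hC.hderiv_y hy hz
  have hin : HasDerivAt (fun u : ℝ => u / z) (1 / z) y := by
    simpa using (hasDerivAt_id y).div_const z
  have hout : HasDerivAt (fun t => c t 1) (cy (y / z) 1) (y / z) :=
    hC.hderiv_y (div_pos hy hz) one_pos
  have hcomp : HasDerivAt (fun u : ℝ => c (u / z) 1) (cy (y / z) 1 * (1 / z)) y := by
    have := hout.comp y hin; exact this
  have h2 : HasDerivAt (fun u : ℝ => z * c (u / z) 1) (z * (cy (y / z) 1 * (1 / z))) y :=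
    hcomp.const_mul z
  have hev : (fun u => c u z) =ᶠ[𝓝 y] fun u : ℝ => z * c (u / z) 1 := by
    filter_upwards [Ioi_mem_nhds hy] with u hu
    exact scale_c hC hu hz
  have h3 : HasDerivAt (fun u => c u z) (z * (cy (y / z) 1 * (1 / z))) y :=
    h2.congr_of_eventuallyEq hev
  rw [h1.unique h3]
  field_simp

private lemma cz_scale {c cy cz cyy cyz czz : ℝ → ℝ → ℝ} (hC : AssumptionC c cy cz cyy cyz czz)
    {y z : ℝ} (hy : 0 < y) (hz : 0 < z) :
    cz y z = c (y / z) 1 - y / z * cy (y / z) 1 := by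
  have h1 : HasDerivAt (fun v => c y v) (cz y z) z := hC.hderiv_z hy hz
  have hin : HasDerivAt (fun v : ℝ => y / v) (y * -((z ^ 2)⁻¹)) z := by
    simpa [div_eq_mul_inv] using (hasDerivAt_inv hz.ne').const_mul y
  have hout : HasDerivAt (fun t => c t 1) (cy (y / z) 1) (y / z) :=
    hC.hderiv_y (div_pos hy hz) one_pos
  have hcomp : HasDerivAt (fun v : ℝ => c (y / v) 1) (cy (y / z) 1 * (y * -((z ^ 2)⁻¹))) z :=
    hout.comp z hin
  have h2 : HasDerivAt (fun v : ℝ => v * c (y / v) 1)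
      (1 * c (y / z) 1 + z * (cy (y / z) 1 * (y * -((z ^ 2)⁻¹)))) z := by
    simpa using (hasDerivAt_id' z).fun_mul hcomp
  have hev : (fun v => c y v) =ᶠ[𝓝 z] fun v : ℝ => v * c (y / v) 1 := by
    filter_upwards [Ioi_mem_nhds hz] with v hv
    exact scale_c hC hy hv
  have h3 := h2.congr_of_eventuallyEq hev
  rw [h1.unique h3]
  field_simp
  ring

private noncomputable def TT (G w s : ℝ) : ℝ := (1 - s) / (G * (w + s))

private noncomputable def gg (c : ℝ → ℝ → ℝ) (G w s : ℝ) : ℝ :=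
  G * (w + s) * c (TT G w s) 1

private noncomputable def gg' (c cy : ℝ → ℝ → ℝ) (G w s : ℝ) : ℝ :=
  G * c (TT G w s) 1 - (w + 1) * cy (TT G w s) 1 / (w + s)

private noncomputable def gg2 (cyy : ℝ → ℝ → ℝ) (G w s : ℝ) : ℝ :=
  (w + 1) ^ 2 * cyy (TT G w s) 1 / (G * (w + s) ^ 3)

private noncomputable def DD (c cy : ℝ → ℝ → ℝ) (G w m s : ℝ) : ℝ :=
  gg' c cy G w s / gg c G w s + m * s⁻¹

private noncomputable def DD' (c cy cyy : ℝ → ℝ → ℝ) (G w m s : ℝ) : ℝ :=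
  (gg2 cyy G w s * gg c G w s - gg' c cy G w s * gg' c cy G w s) / gg c G w s ^ 2 +
    m * -((s ^ 2)⁻¹)

private lemma TT_pos {G w s : ℝ} (hG : 0 < G) (hws : 0 < w + s) (hs1 : s < 1) :
    0 < TT G w s :=
  div_pos (by linarith) (by positivity)

private lemma hasDerivAt_TT {G w s : ℝ} (hG : 0 < G) (hws : 0 < w + s) :
    HasDerivAt (TT G w) (-(w + 1) / (G * (w + s) ^ 2)) s := by
  have hnum : HasDerivAt (fun u : ℝ => 1 - u) (-1) s := by
    simpa using (hasDerivAt_id s).const_sub 1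
  have hden : HasDerivAt (fun u : ℝ => G * (w + u)) (G * 1) s := by
    simpa using ((hasDerivAt_id s).const_add w).const_mul G
  have hG0 : G ≠ 0 := ne_of_gt hG
  have hws0 : w + s ≠ 0 := ne_of_gt hws
  have h := hnum.div hden (by positivity)
  have heq : -(w + 1) / (G * (w + s) ^ 2) =
      (-1 * (G * (w + s)) - (1 - s) * (G * 1)) / (G * (w + s)) ^ 2 := by
    field_simp
    ring
  rw [heq]
  exact h

private lemma gg_pos {c cy cz cyy cyz czz : ℝ → ℝ → ℝ} (hC : AssumptionC c cy cz cyy cyz czz)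
    {G w s : ℝ} (hG : 0 < G) (hws : 0 < w + s) (hs1 : s < 1) : 0 < gg c G w s :=
  mul_pos (mul_pos hG hws) (hC.c_pos (TT_pos hG hws hs1) one_pos)

private lemma hasDerivAt_gg {c cy cz cyy cyz czz : ℝ → ℝ → ℝ}
    (hC : AssumptionC c cy cz cyy cyz czz) {G w s : ℝ}
    (hG : 0 < G) (hws : 0 < w + s) (hs1 : s < 1) :
    HasDerivAt (gg c G w) (gg' c cy G w s) s := by
  have hT := hasDerivAt_TT (w := w) hG hws
  have hTpos := TT_pos (w := w) hG hws hs1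
  have hφ : HasDerivAt (fun t => c t 1) (cy (TT G w s) 1) (TT G w s) :=
    hC.hderiv_y hTpos one_pos
  have hcomp : HasDerivAt (fun u => c (TT G w u) 1)
      (cy (TT G w s) 1 * (-(w + 1) / (G * (w + s) ^ 2))) s := hφ.comp s hT
  have hden : HasDerivAt (fun u : ℝ => G * (w + u)) (G * 1) s := by
    simpa using ((hasDerivAt_id s).const_add w).const_mul G
  have h := hden.mul hcomp
  have hG0 : G ≠ 0 := ne_of_gt hG
  have hws0 : w + s ≠ 0 := ne_of_gt hws
  have heq : gg' c cy G w s = G * 1 * c (TT G w s) 1 +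
      G * (w + s) * (cy (TT G w s) 1 * (-(w + 1) / (G * (w + s) ^ 2))) := by
    simp only [gg']
    field_simp
    ring
  rw [heq]
  exact h

private lemma hasDerivAt_gg' {c cy cz cyy cyz czz : ℝ → ℝ → ℝ}
    (hC : AssumptionC c cy cz cyy cyz czz) {G w s : ℝ}
    (hG : 0 < G) (hws : 0 < w + s) (hs1 : s < 1) :
    HasDerivAt (gg' c cy G w) (gg2 cyy G w s) s := by
  have hT := hasDerivAt_TT (w := w) hG hws
  have hTpos := TT_pos (w := w) hG hws hs1
  have hφc : HasDerivAt (fun u => c (TT G w u) 1)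
      (cy (TT G w s) 1 * (-(w + 1) / (G * (w + s) ^ 2))) s :=
    (hC.hderiv_y hTpos one_pos).comp s hT
  have hψc : HasDerivAt (fun u => cy (TT G w u) 1)
      (cyy (TT G w s) 1 * (-(w + 1) / (G * (w + s) ^ 2))) s :=
    (hC.hderiv_yy hTpos one_pos).comp s hT
  have h1 := hφc.const_mul G
  have hden2 : HasDerivAt (fun u : ℝ => w + u) 1 s := by
    simpa using (hasDerivAt_id s).const_add w
  have h2 := (hψc.const_mul (w + 1)).div hden2 (ne_of_gt hws)
  have h := h1.sub h2
  have hG0 : G ≠ 0 := ne_of_gt hG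
  have hws0 : w + s ≠ 0 := ne_of_gt hws
  have heq : gg2 cyy G w s =
      G * (cy (TT G w s) 1 * (-(w + 1) / (G * (w + s) ^ 2))) -
        ((w + 1) * (cyy (TT G w s) 1 * (-(w + 1) / (G * (w + s) ^ 2))) * (w + s) -
          (w + 1) * cy (TT G w s) 1 * 1) / (w + s) ^ 2 := by
    simp only [gg2]
    field_simp
    ring
  rw [heq]
  exact h

private lemma hasDerivAt_DD {c cy cz cyy cyz czz : ℝ → ℝ → ℝ}
    (hC : AssumptionC c cy cz cyy cyz czz) {G w m s : ℝ}
    (hG : 0 < G) (hws : 0 < w + s) (hs0 : 0 < s) (hs1 : s < 1) :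
    HasDerivAt (DD c cy G w m) (DD' c cy cyy G w m s) s := by
  have hdiv := (hasDerivAt_gg' hC hG hws hs1).div (hasDerivAt_gg hC hG hws hs1)
    (gg_pos hC hG hws hs1).ne'
  have hinv := (hasDerivAt_inv hs0.ne').const_mul m
  exact hdiv.add hinv

private lemma DD'_neg {c cy cz cyy cyz czz : ℝ → ℝ → ℝ}
    (hC : AssumptionC c cy cz cyy cyz czz) {G w m s : ℝ}
    (hG : 0 < G) (hws : 0 < w + s) (hm : 0 < m) (hs0 : 0 < s) (hs1 : s < 1) :
    DD' c cy cyy G w m s < 0 := by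
  have hgpos := gg_pos hC hG hws hs1
  have hg2neg : gg2 cyy G w s < 0 := by
    have h := hC.cyy_neg (TT_pos (w := w) hG hws hs1) one_pos
    have hw1 : (0:ℝ) < w + 1 := by linarith
    exact div_neg_of_neg_of_pos (mul_neg_of_pos_of_neg (by positivity) h) (by positivity)
  have h1 : (gg2 cyy G w s * gg c G w s - gg' c cy G w s * gg' c cy G w s) / gg c G w s ^ 2 < 0 :=
    div_neg_of_neg_of_pos (by nlinarith [sq_nonneg (gg' c cy G w s), mul_neg_of_neg_of_pos hg2neg hgpos]) (by positivity)
  have h2 : m * -((s ^ 2)⁻¹) < 0 := by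
    have : (0:ℝ) < (s ^ 2)⁻¹ := by positivity
    nlinarith
  simp only [DD']
  linarith

private lemma c_eq_gg {c cy cz cyy cyz czz : ℝ → ℝ → ℝ}
    (hC : AssumptionC c cy cz cyy cyz czz) {G w s : ℝ}
    (hG : 0 < G) (hws : 0 < w + s) (hs1 : s < 1) :
    c (1 - s) (G * (w + s)) = gg c G w s := by
  have h1 : (0:ℝ) < 1 - s := by linarith
  have h2 : (0:ℝ) < G * (w + s) := by positivity
  rw [scale_c hC h1 h2]
  rfl

private lemma hasDerivAt_F {c cy cz cyy cyz czz : ℝ → ℝ → ℝ}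
    (hC : AssumptionC c cy cz cyy cyz czz) {G w m s : ℝ}
    (hG : 0 < G) (hw : 0 < w) (hs0 : 0 < s) (hs1 : s < 1) :
    HasDerivAt (fun u => Real.log (c (1 - u) (G * (w + u))) + m * Real.log u)
      (DD c cy G w m s) s := by
  have hws : 0 < w + s := by linarith
  have hcg : (fun u => c (1 - u) (G * (w + u))) =ᶠ[𝓝 s] gg c G w := by
    filter_upwards [Ioo_mem_nhds (show -w < s by linarith) hs1] with u hu
    exact c_eq_gg hC hG (by linarith [hu.1]) hu.2
  have hgd : HasDerivAt (fun u => c (1 - u) (G * (w + u))) (gg' c cy G w s) s :=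
    (hasDerivAt_gg hC hG hws hs1).congr_of_eventuallyEq hcg
  have hcpos : 0 < c (1 - s) (G * (w + s)) := hC.c_pos (by linarith) (by positivity)
  have hlog := hgd.log hcpos.ne'
  rw [c_eq_gg hC hG hws hs1] at hlog
  have hml : HasDerivAt (fun u => m * Real.log u) (m * s⁻¹) s :=
    (Real.hasDerivAt_log hs0.ne').const_mul m
  exact hlog.add hml

private lemma gcz_eq {c cy cz cyy cyz czz : ℝ → ℝ → ℝ}
    (hC : AssumptionC c cy cz cyy cyz czz) {G w s : ℝ}
    (hG : 0 < G) (hws : 0 < w + s) (hs1 : s < 1) :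
    G * cz (1 - s) (G * (w + s)) - cy (1 - s) (G * (w + s)) = gg' c cy G w s := by
  have h1 : (0:ℝ) < 1 - s := by linarith
  have h2 : (0:ℝ) < G * (w + s) := by positivity
  have hG0 : G ≠ 0 := ne_of_gt hG
  have hws0 : w + s ≠ 0 := ne_of_gt hws
  rw [cy_scale hC h1 h2, cz_scale hC h1 h2]
  simp only [gg', TT]
  field_simp
  ring

private lemma eq_iff_DD {c cy cz cyy cyz czz : ℝ → ℝ → ℝ}
    (hC : AssumptionC c cy cz cyy cyz czz) {G w m s : ℝ}
    (hG : 0 < G) (hw : 0 < w) (hs0 : 0 < s) (hs1 : s < 1) :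
    (G * s * cz (1 - s) (G * (w + s)) =
      s * cy (1 - s) (G * (w + s)) - m * c (1 - s) (G * (w + s))) ↔
      DD c cy G w m s = 0 := by
  have hws : 0 < w + s := by linarith
  have hcpos : 0 < c (1 - s) (G * (w + s)) := hC.c_pos (by linarith) (by positivity)
  have hDDeq : DD c cy G w m s =
      (G * s * cz (1 - s) (G * (w + s)) -
        (s * cy (1 - s) (G * (w + s)) - m * c (1 - s) (G * (w + s)))) /
        (c (1 - s) (G * (w + s)) * s) := by
    have h1 : DD c cy G w m s = gg' c cy G w s / gg c G w s + m * s⁻¹ := rfl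
    rw [h1, ← c_eq_gg hC hG hws hs1, ← gcz_eq hC hG hws hs1]
    field_simp
    ring
  rw [hDDeq, div_eq_zero_iff, or_iff_left (mul_pos hcpos hs0).ne', sub_eq_zero]

/-- Unique steady state with log utility (`γ = 1`): the function
`f(s) = log c(1−s, G(w+s)) + m·log s` is strictly concave on `(0,1)`, `f' → ∞` as
`s → 0⁺` and `f' → −∞` as `s → 1⁻`, there is a unique `s* ∈ (0,1)` satisfying the
steady state condition, and this `s*` is the unique maximizer of `f` on `(0,1)`. -/
theorem stmt_18 (c cy cz cyy cyz czz : ℝ → ℝ → ℝ)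
    (hC : AssumptionC c cy cz cyy cyz czz) (G w m : ℝ)
    (hG : 1 < G) (hw : 0 < w) (hm : 0 < m) :
    StrictConcaveOn ℝ (Ioo (0:ℝ) 1)
      (fun s => Real.log (c (1 - s) (G * (w + s))) + m * Real.log s) ∧
    Tendsto (deriv (fun s => Real.log (c (1 - s) (G * (w + s))) + m * Real.log s))
      (𝓝[>] (0:ℝ)) atTop ∧
    Tendsto (deriv (fun s => Real.log (c (1 - s) (G * (w + s))) + m * Real.log s))
      (𝓝[<] (1:ℝ)) atBot ∧
    (∃! s : ℝ, s ∈ Ioo (0:ℝ) 1 ∧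
      G * s * cz (1 - s) (G * (w + s)) =
        s * cy (1 - s) (G * (w + s)) - m * c (1 - s) (G * (w + s))) ∧
    (∀ s : ℝ, s ∈ Ioo (0:ℝ) 1 →
      G * s * cz (1 - s) (G * (w + s)) =
        s * cy (1 - s) (G * (w + s)) - m * c (1 - s) (G * (w + s)) →
      ∀ u ∈ Ioo (0:ℝ) 1, u ≠ s →
        Real.log (c (1 - u) (G * (w + u))) + m * Real.log u <
          Real.log (c (1 - s) (G * (w + s))) + m * Real.log s) := by
  have hG0 : (0:ℝ) < G := lt_trans one_pos hG
  set F : ℝ → ℝ := fun s => Real.log (c (1 - s) (G * (w + s))) + m * Real.log s with hF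
  have hws : ∀ s ∈ Ioo (0:ℝ) 1, 0 < w + s := fun s hs => by
    have := hs.1; linarith
  have key1 : ∀ s ∈ Ioo (0:ℝ) 1, HasDerivAt F (DD c cy G w m s) s := fun s hs =>
    hasDerivAt_F hC hG0 hw hs.1 hs.2
  have key2 : ∀ s ∈ Ioo (0:ℝ) 1,
      HasDerivAt (DD c cy G w m) (DD' c cy cyy G w m s) s := fun s hs =>
    hasDerivAt_DD hC hG0 (hws s hs) hs.1 hs.2
  have keyneg : ∀ s ∈ Ioo (0:ℝ) 1, DD' c cy cyy G w m s < 0 := fun s hs =>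
    DD'_neg hC hG0 (hws s hs) hm hs.1 hs.2
  have hFcont : ContinuousOn F (Ioo (0:ℝ) 1) := fun s hs =>
    (key1 s hs).continuousAt.continuousWithinAt
  have hderivF : ∀ s ∈ Ioo (0:ℝ) 1, deriv F s = DD c cy G w m s := fun s hs =>
    (key1 s hs).deriv
  -- (1) strict concavity
  have hconc : StrictConcaveOn ℝ (Ioo (0:ℝ) 1) F := by
    apply strictConcaveOn_of_deriv2_neg (convex_Ioo 0 1) hFcont
    intro x hx
    rw [interior_Ioo] at hx
    have hev : deriv F =ᶠ[𝓝 x] DD c cy G w m := by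
      filter_upwards [isOpen_Ioo.eventually_mem hx] with u hu
      exact hderivF u hu
    simp only [Function.iterate_succ, Function.iterate_zero, Function.comp_apply, id_eq]
    rw [hev.deriv_eq, (key2 x hx).deriv]
    exact keyneg x hx
  -- tendsto of DD at 0⁺
  have hIoo0 : Ioo (0:ℝ) 1 ∈ 𝓝[>] (0:ℝ) :=
    Ioo_mem_nhdsGT_of_mem ⟨le_refl _, one_pos⟩
  have hIoo1 : Ioo (0:ℝ) 1 ∈ 𝓝[<] (1:ℝ) :=
    Ioo_mem_nhdsLT_of_mem ⟨one_pos, le_refl _⟩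
  have hw0 : (0:ℝ) < w + 0 := by linarith
  have hDDtop : Tendsto (DD c cy G w m) (𝓝[>] (0:ℝ)) atTop := by
    have hg0 : ContinuousAt (gg c G w) 0 := (hasDerivAt_gg hC hG0 hw0 one_pos).continuousAt
    have hg'0 : ContinuousAt (gg' c cy G w) 0 :=
      (hasDerivAt_gg' hC hG0 hw0 one_pos).continuousAt
    have hdivc : ContinuousAt (fun s => gg' c cy G w s / gg c G w s) 0 :=
      hg'0.div hg0 (gg_pos hC hG0 hw0 one_pos).ne'
    have hfirst : Tendsto (fun s => gg' c cy G w s / gg c G w s) (𝓝[>] (0:ℝ))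
        (𝓝 (gg' c cy G w 0 / gg c G w 0)) := hdivc.tendsto.mono_left nhdsWithin_le_nhds
    have hsecond : Tendsto (fun s : ℝ => m * s⁻¹) (𝓝[>] (0:ℝ)) atTop :=
      tendsto_inv_nhdsGT_zero.const_mul_atTop hm
    exact hfirst.add_atTop hsecond
  have htop : Tendsto (deriv F) (𝓝[>] (0:ℝ)) atTop := by
    apply hDDtop.congr'
    filter_upwards [hIoo0] with u hu
    exact (hderivF u hu).symm
  -- tendsto of DD at 1⁻
  have hφmono : StrictMonoOn (fun t : ℝ => c t 1) (Ioi 0) := by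
    apply strictMonoOn_of_deriv_pos (convex_Ioi 0)
    · exact fun t ht => (hC.hderiv_y ht one_pos).continuousAt.continuousWithinAt
    · intro t ht
      rw [interior_Ioi] at ht
      rw [(hC.hderiv_y ht one_pos).deriv]
      exact hC.cy_pos ht one_pos
  have hratio : Tendsto (fun t : ℝ => cy t 1 / c t 1) (𝓝[>] (0:ℝ)) atTop := by
    apply tendsto_atTop_mono' _ _
      ((hC.inada_y one_pos).atTop_div_const (hC.c_pos one_pos one_pos))
    filter_upwards [Ioo_mem_nhdsGT_of_mem
      (show (0:ℝ) ∈ Ico (0:ℝ) 1 from ⟨le_refl _, one_pos⟩)] with t ht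
    have h1 : c t 1 ≤ c 1 1 := (hφmono (mem_Ioi.mpr ht.1) (mem_Ioi.mpr one_pos) ht.2).le
    gcongr
    · exact (hC.cy_pos ht.1 one_pos).le
    · exact hC.c_pos ht.1 one_pos
  have hTt : Tendsto (TT G w) (𝓝[<] (1:ℝ)) (𝓝[>] (0:ℝ)) := by
    rw [tendsto_nhdsWithin_iff]
    constructor
    · have hc1 : ContinuousAt (TT G w) 1 :=
        (hasDerivAt_TT hG0 (show (0:ℝ) < w + 1 by linarith)).continuousAt
      have h2 := hc1.tendsto.mono_left (nhdsWithin_le_nhds : 𝓝[<] (1:ℝ) ≤ 𝓝 1)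
      rwa [show TT G w 1 = 0 by simp [TT]] at h2
    · filter_upwards [hIoo1] with u hu
      exact TT_pos hG0 (hws u hu) hu.2
  have hcompR : Tendsto (fun s => cy (TT G w s) 1 / c (TT G w s) 1) (𝓝[<] (1:ℝ)) atTop :=
    hratio.comp hTt
  have hcoef : Tendsto (fun s : ℝ => (w + 1) / (G * (w + s) ^ 2)) (𝓝[<] (1:ℝ))
      (𝓝 ((w + 1) / (G * (w + 1) ^ 2))) := by
    have hc : ContinuousAt (fun s : ℝ => (w + 1) / (G * (w + s) ^ 2)) 1 := by
      apply ContinuousAt.div continuousAt_const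
      · fun_prop
      · show G * (w + 1) ^ 2 ≠ 0
        positivity
    exact hc.tendsto.mono_left nhdsWithin_le_nhds
  have hprod : Tendsto (fun s : ℝ => (w + 1) / (G * (w + s) ^ 2) *
      (cy (TT G w s) 1 / c (TT G w s) 1)) (𝓝[<] (1:ℝ)) atTop :=
    hcoef.pos_mul_atTop (by positivity) hcompR
  have hnegb : Tendsto (fun s : ℝ => -((w + 1) / (G * (w + s) ^ 2) *
      (cy (TT G w s) 1 / c (TT G w s) 1))) (𝓝[<] (1:ℝ)) atBot :=
    tendsto_neg_atTop_atBot.comp hprod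
  have hone : Tendsto (fun s : ℝ => (w + s)⁻¹) (𝓝[<] (1:ℝ)) (𝓝 ((w + 1)⁻¹)) := by
    have hc : ContinuousAt (fun s : ℝ => (w + s)⁻¹) 1 := by
      apply ContinuousAt.inv₀
      · fun_prop
      · show w + 1 ≠ 0
        positivity
    exact hc.tendsto.mono_left nhdsWithin_le_nhds
  have hA : Tendsto (fun s : ℝ => (w + s)⁻¹ + -((w + 1) / (G * (w + s) ^ 2) *
      (cy (TT G w s) 1 / c (TT G w s) 1))) (𝓝[<] (1:ℝ)) atBot := hone.add_atBot hnegb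
  have hm1 : Tendsto (fun s : ℝ => m * s⁻¹) (𝓝[<] (1:ℝ)) (𝓝 (m * 1⁻¹)) := by
    have hc : ContinuousAt (fun s : ℝ => m * s⁻¹) 1 :=
      (continuousAt_inv₀ one_ne_zero).const_mul m
    exact hc.tendsto.mono_left nhdsWithin_le_nhds
  have hDDbot : Tendsto (DD c cy G w m) (𝓝[<] (1:ℝ)) atBot := by
    apply (hA.atBot_add hm1).congr'
    filter_upwards [hIoo1] with u hu
    have h1 : (0:ℝ) < w + u := hws u hu
    have h2 : (0:ℝ) < c (TT G w u) 1 := hC.c_pos (TT_pos hG0 h1 hu.2) one_pos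
    have hu0 : u ≠ 0 := ne_of_gt hu.1
    have hG0' : G ≠ 0 := ne_of_gt hG0
    have h10 : w + u ≠ 0 := ne_of_gt h1
    have h20 : c (TT G w u) 1 ≠ 0 := ne_of_gt h2
    simp only [DD, gg, gg']
    field_simp
    ring
  have hbot : Tendsto (deriv F) (𝓝[<] (1:ℝ)) atBot := by
    apply hDDbot.congr'
    filter_upwards [hIoo1] with u hu
    exact (hderivF u hu).symm
  -- strict antitonicity of DD
  have hDanti : StrictAntiOn (DD c cy G w m) (Ioo (0:ℝ) 1) := by
    apply strictAntiOn_of_deriv_neg (convex_Ioo 0 1)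
    · exact fun s hs => (key2 s hs).continuousAt.continuousWithinAt
    · intro x hx
      rw [interior_Ioo] at hx
      rw [(key2 x hx).deriv]
      exact keyneg x hx
  -- existence of the zero
  have hev0 : ∀ᶠ s in 𝓝[>] (0:ℝ), s ∈ Ioo (0:ℝ) 1 := eventually_of_mem hIoo0 fun x hx => hx
  have hev1 : ∀ᶠ s in 𝓝[<] (1:ℝ), s ∈ Ioo (0:ℝ) 1 := eventually_of_mem hIoo1 fun x hx => hx
  obtain ⟨a, haD, ha⟩ := ((hDDtop.eventually_ge_atTop 1).and hev0).exists
  obtain ⟨b, hbD, hb⟩ := ((hDDbot.eventually_le_atBot (-1)).and hev1).exists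
  have hab : a < b := by
    have hlt : DD c cy G w m b < DD c cy G w m a := by linarith
    exact (hDanti.lt_iff_gt hb ha).mp hlt
  have hsub : Icc a b ⊆ Ioo (0:ℝ) 1 := fun x hx =>
    ⟨lt_of_lt_of_le ha.1 hx.1, lt_of_le_of_lt hx.2 hb.2⟩
  have hcontD : ContinuousOn (DD c cy G w m) (Icc a b) := fun x hx =>
    (key2 x (hsub hx)).continuousAt.continuousWithinAt
  have h0mem : (0:ℝ) ∈ Icc (DD c cy G w m b) (DD c cy G w m a) := ⟨by linarith, by linarith⟩
  obtain ⟨s₀, hs₀m, hs₀⟩ := intermediate_value_Icc' hab.le hcontD h0mem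
  have hs₀Ioo : s₀ ∈ Ioo (0:ℝ) 1 := hsub hs₀m
  refine ⟨hconc, htop, hbot,
    ⟨s₀, ⟨hs₀Ioo, (eq_iff_DD hC hG0 hw hs₀Ioo.1 hs₀Ioo.2).mpr hs₀⟩, ?_⟩, ?_⟩
  · rintro s' ⟨hs', heq'⟩
    exact hDanti.injOn hs' hs₀Ioo
      (by rw [(eq_iff_DD hC hG0 hw hs'.1 hs'.2).mp heq', hs₀])
  · intro s hs heq u hu hne
    have hDs : DD c cy G w m s = 0 := (eq_iff_DD hC hG0 hw hs.1 hs.2).mp heq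
    rcases hne.lt_or_gt with h | h
    · have hsub2 : Ioc (0:ℝ) s ⊆ Ioo (0:ℝ) 1 := fun x hx =>
        ⟨hx.1, lt_of_le_of_lt hx.2 hs.2⟩
      have hmono : StrictMonoOn F (Ioc (0:ℝ) s) := by
        apply strictMonoOn_of_deriv_pos (convex_Ioc 0 s) (hFcont.mono hsub2)
        intro x hx
        rw [interior_Ioc] at hx
        have hxm : x ∈ Ioo (0:ℝ) 1 := hsub2 ⟨hx.1, hx.2.le⟩
        rw [hderivF x hxm]
        have := hDanti hxm hs hx.2
        linarith
      exact hmono ⟨hu.1, h.le⟩ ⟨hs.1, le_refl s⟩ h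
    · have hsub2 : Ico s (1:ℝ) ⊆ Ioo (0:ℝ) 1 := fun x hx =>
        ⟨lt_of_lt_of_le hs.1 hx.1, hx.2⟩
      have hanti : StrictAntiOn F (Ico s (1:ℝ)) := by
        apply strictAntiOn_of_deriv_neg (convex_Ico s 1) (hFcont.mono hsub2)
        intro x hx
        rw [interior_Ico] at hx
        have hxm : x ∈ Ioo (0:ℝ) 1 := hsub2 ⟨hx.1.le, hx.2⟩
        rw [hderivF x hxm]
        have := hDanti hs hxm hx.1
        linarith
      exact hanti ⟨le_refl s, hs.2⟩ ⟨h.le, hu.2⟩ h
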